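/- Consider the nonlinear system ż(t) = f(z(t), d(t)) on ℝⁿ with initial datum z(0) = z₀, where f : ℝⁿ × ℝᵐ → ℝⁿ is continuous, satisfies f(0,0) = 0, and d ∈ L^∞_loc(ℝ≥0; ℝᵐ). Suppose the system admits an FTISS Lyapunov function, i.e., there exist a continuously differentiable V : ℝⁿ → ℝ≥0, functions μ₁, μ₂ of class K∞, a function χ of class K, and constants c > 0 and θ ∈ (0,1) such that μ₁(|x|) ≤ V(x) ≤ μ₂(|x|) for all x ∈ ℝⁿ, and DV(z)·f(z,d) ≤ −c V(z)^θ whenever |z| ≥ χ(|d|). Then the system is FTISS: there exist ϑ of class K and β of class GKL such that every solution z : ℝ≥0 → ℝⁿ of the system satisfies |z(t)| ≤ β(|z₀|, t) + ϑ(ess sup_{s∈(0,t)} |d(s)|) for all t ≥ 0. -/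

import Mathlib

open MeasureTheory Set Filter

/-- A class-`K` comparison function: continuous, strictly increasing on `[0,∞)`,
vanishing at `0` (and `[0,∞)`-valued on `[0,∞)`). -/
def ClassK (ϑ : ℝ → ℝ) : Prop :=
  ContinuousOn ϑ (Ici 0) ∧ StrictMonoOn ϑ (Ici 0) ∧ ϑ 0 = 0 ∧ ∀ s ∈ Ici (0:ℝ), 0 ≤ ϑ s

/-- A class-`K∞` function: class `K` and unbounded. -/
def ClassKInf (ϑ : ℝ → ℝ) : Prop :=
  ClassK ϑ ∧ Tendsto ϑ atTop atTop

/-- A class-`GKL` function: `β(·,0)` is of class `K`, `β` is `[0,∞)`-valued, and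
for each fixed `s > 0` there is `T̃(s) ≥ 0` with `β(s,t) = 0` for all `t ≥ T̃(s)`. -/
def ClassGKL (β : ℝ → ℝ → ℝ) : Prop :=
  (∀ s ∈ Ici (0:ℝ), ∀ t ∈ Ici (0:ℝ), 0 ≤ β s t) ∧
  ClassK (fun s => β s 0) ∧
  ∀ s > (0:ℝ), ∃ T ≥ (0:ℝ), ∀ t ≥ T, β s t = 0

open scoped Topology

open Classical in
noncomputable def KInv (μ : ℝ → ℝ) (y : ℝ) : ℝ :=
  if h : ∃ x, 0 ≤ x ∧ μ x = y then h.choose else 0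

namespace KInvAux

variable {μ : ℝ → ℝ} {y : ℝ}

lemma exists_inv (hμ : ClassKInf μ) (hy : 0 ≤ y) : ∃ x, 0 ≤ x ∧ μ x = y := by
  obtain ⟨⟨hcont, hmono, h0, hnn⟩, htop⟩ := hμ
  obtain ⟨b, hb1, hb2⟩ := ((htop.eventually_ge_atTop y).and (eventually_ge_atTop (0:ℝ))).exists
  have hIVT := intermediate_value_Icc hb2 (hcont.mono (Icc_subset_Ici_self))
  have : y ∈ Icc (μ 0) (μ b) := by rw [h0]; exact ⟨hy, hb1⟩
  obtain ⟨x, hx, hxy⟩ := hIVT this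
  exact ⟨x, hx.1, hxy⟩

lemma spec (hμ : ClassKInf μ) (hy : 0 ≤ y) : 0 ≤ KInv μ y ∧ μ (KInv μ y) = y := by
  have h := exists_inv hμ hy
  rw [KInv]
  rw [dif_pos h]
  exact h.choose_spec

lemma nonneg (hμ : ClassKInf μ) (hy : 0 ≤ y) : 0 ≤ KInv μ y := (spec hμ hy).1

lemma map (hμ : ClassKInf μ) (hy : 0 ≤ y) : μ (KInv μ y) = y := (spec hμ hy).2

lemma leftInv (hμ : ClassKInf μ) {x : ℝ} (hx : 0 ≤ x) : KInv μ (μ x) = x := by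
  have hμx : 0 ≤ μ x := hμ.1.2.2.2 x hx
  exact hμ.1.2.1.injOn (nonneg hμ hμx) hx (map hμ hμx)

lemma zero (hμ : ClassKInf μ) : KInv μ 0 = 0 := by
  have := leftInv hμ (le_refl (0:ℝ))
  rwa [hμ.1.2.2.1] at this

lemma key (hμ : ClassKInf μ) {x : ℝ} (hx : 0 ≤ x) (hy : 0 ≤ y) (h : μ x ≤ y) :
    x ≤ KInv μ y := by
  by_contra h'
  push_neg at h'
  have := hμ.1.2.1 (nonneg hμ hy) hx h'
  rw [map hμ hy] at this
  linarith

lemma strictMonoOn (hμ : ClassKInf μ) : StrictMonoOn (KInv μ) (Ici 0) := by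
  intro a ha b hb hab
  by_contra h'
  push_neg at h'
  have := hμ.1.2.1.monotoneOn (nonneg hμ hb) (nonneg hμ ha) h'
  rw [map hμ ha, map hμ hb] at this
  linarith

lemma monotoneOn (hμ : ClassKInf μ) : MonotoneOn (KInv μ) (Ici 0) :=
  (strictMonoOn hμ).monotoneOn

lemma pos (hμ : ClassKInf μ) (hy : 0 < y) : 0 < KInv μ y := by
  rcases (nonneg hμ hy.le).lt_or_eq with h | h
  · exact h
  · exfalso
    have := map hμ hy.le
    rw [← h, hμ.1.2.2.1] at this
    linarith

lemma continuousOn (hμ : ClassKInf μ) : ContinuousOn (KInv μ) (Ici 0) := by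
  intro y hy
  rcases eq_or_lt_of_le (mem_Ici.mp hy) with rfl | hpos
  · refine StrictMonoOn.continuousWithinAt_right_of_surjOn (strictMonoOn hμ)
      self_mem_nhdsWithin ?_
    intro w hw
    rw [zero hμ] at hw
    exact ⟨μ w, hμ.1.2.2.2 w (mem_Ici.mpr (le_of_lt hw)), leftInv hμ (le_of_lt hw)⟩
  · apply ContinuousAt.continuousWithinAt
    have hψpos : 0 < KInv μ y := pos hμ hpos
    refine StrictMonoOn.continuousAt_of_exists_between (strictMonoOn hμ)
      (Ici_mem_nhds hpos) ?_ ?_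
    · intro b hb
      refine ⟨μ (max b 0), hμ.1.2.2.2 _ (mem_Ici.mpr (le_max_right _ _)), ?_⟩
      rw [leftInv hμ (le_max_right _ _)]
      exact ⟨le_max_left _ _, max_lt hb hψpos⟩
    · intro b hb
      have hb0 : 0 ≤ b := le_trans (nonneg hμ hpos.le) hb.le
      exact ⟨μ b, hμ.1.2.2.2 b hb0, by rw [leftInv hμ hb0]; exact ⟨hb, le_rfl⟩⟩

end KInvAux

lemma core_decay {g g' : ℝ → ℝ} {c θ L a b : ℝ} (hc : 0 < c) (hθ : θ ∈ Ioo (0:ℝ) 1)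
    (hab : a ≤ b) (hL : 0 ≤ L)
    (hg : ∀ t ∈ Icc a b, HasDerivAt g (g' t) t)
    (hgL : ∀ t ∈ Icc a b, L < g t)
    (hmeas : AEStronglyMeasurable g' (volume.restrict (Icc a b)))
    (hbd : ∃ C, ∀ᵐ s ∂(volume.restrict (Icc a b)), |g' s| ≤ C)
    (hdec : ∀ᵐ s ∂(volume.restrict (Icc a b)), g' s ≤ -c * g s ^ θ) :
    g b ^ (1 - θ) ≤ g a ^ (1 - θ) - c * (1 - θ) * (b - a) := by
  obtain ⟨hθ0, hθ1⟩ := hθ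
  set P := 1 - θ with hPdef
  have hP : 0 < P := by rw [hPdef]; linarith
  have hgpos : ∀ t ∈ Icc a b, 0 < g t := fun t ht => lt_of_le_of_lt hL (hgL t ht)
  have hgc : ContinuousOn g (Icc a b) := fun t ht => (hg t ht).continuousAt.continuousWithinAt
  obtain ⟨t₀, ht₀, hmin⟩ := isCompact_Icc.exists_isMinOn ⟨a, left_mem_Icc.2 hab⟩ hgc
  have hε : 0 < g t₀ := hgpos t₀ ht₀
  set φ' : ℝ → ℝ := fun s => g' s * P * g s ^ (P - 1) with hφ'def
  have hder : ∀ t ∈ Icc a b, HasDerivAt (fun s => g s ^ P) (φ' t) t := fun t ht =>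
    (hg t ht).rpow_const (Or.inl (hgpos t ht).ne')
  have hgp : ContinuousOn (fun s => g s ^ (P - 1)) (Icc a b) :=
    hgc.rpow_const (fun x hx => Or.inl (hgpos x hx).ne')
  have hφ'm : AEStronglyMeasurable φ' (volume.restrict (Icc a b)) :=
    (hmeas.mul aestronglyMeasurable_const).mul (hgp.aestronglyMeasurable measurableSet_Icc)
  obtain ⟨C, hC⟩ := hbd
  have hbd' : ∀ᵐ s ∂(volume.restrict (Icc a b)), ‖φ' s‖ ≤ |C| * P * g t₀ ^ (P - 1) := by
    filter_upwards [hC, ae_restrict_mem measurableSet_Icc] with s hs hmem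
    have h1 : |g s ^ (P - 1)| ≤ g t₀ ^ (P - 1) := by
      rw [abs_of_nonneg (Real.rpow_nonneg (hgpos s hmem).le _)]
      exact Real.rpow_le_rpow_of_nonpos hε (hmin hmem) (by linarith)
    calc ‖φ' s‖ = |g' s| * |P| * |g s ^ (P - 1)| := by
          rw [Real.norm_eq_abs, hφ'def, abs_mul, abs_mul]
      _ ≤ |C| * P * g t₀ ^ (P - 1) := by
          rw [abs_of_pos hP]
          exact mul_le_mul (mul_le_mul (le_trans hs (le_abs_self C)) le_rfl hP.le (abs_nonneg C))
            h1 (abs_nonneg _) (by positivity)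
  haveI : IsFiniteMeasure (volume.restrict (Icc a b)) :=
    ⟨by rw [Measure.restrict_apply_univ]; exact measure_Icc_lt_top⟩
  have hintIcc : IntegrableOn φ' (Icc a b) volume :=
    (integrable_const (|C| * P * g t₀ ^ (P - 1))).mono' hφ'm hbd'
  have hint : IntervalIntegrable φ' volume a b := by
    rw [intervalIntegrable_iff]
    exact hintIcc.mono_set (by rw [uIoc_of_le hab]; exact Ioc_subset_Icc_self)
  have hFTC := intervalIntegral.integral_eq_sub_of_hasDeriv_right_of_le hab
    (hgc.rpow_const (fun x hx => Or.inl (hgpos x hx).ne'))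
    (fun x hx => (hder x (Ioo_subset_Icc_self hx)).hasDerivWithinAt) hint
  have hmono : (∫ s in a..b, φ' s) ≤ ∫ s in a..b, (-(c * P)) := by
    apply intervalIntegral.integral_mono_ae_restrict hab hint intervalIntegrable_const
    filter_upwards [hdec, ae_restrict_mem measurableSet_Icc] with s hs hmem
    have hgs := hgpos s hmem
    have h1 : g' s * (P * g s ^ (P - 1)) ≤ -c * g s ^ θ * (P * g s ^ (P - 1)) :=
      mul_le_mul_of_nonneg_right hs (mul_nonneg hP.le (Real.rpow_nonneg hgs.le _))
    have h2 : g s ^ θ * g s ^ (P - 1) = 1 := by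
      rw [← Real.rpow_add hgs]
      have : θ + (P - 1) = 0 := by rw [hPdef]; ring
      rw [this, Real.rpow_zero]
    calc φ' s = g' s * (P * g s ^ (P - 1)) := by rw [hφ'def]; ring
      _ ≤ -c * g s ^ θ * (P * g s ^ (P - 1)) := h1
      _ = -(c * P) * (g s ^ θ * g s ^ (P - 1)) := by ring
      _ = -(c * P) := by rw [h2, mul_one]
  rw [hFTC, intervalIntegral.integral_const, smul_eq_mul] at hmono
  nlinarith [hmono]

/-- if the system `ż = f(z,d)` on `ℝⁿ` (with `f` continuous,
`f(0,0) = 0`, and `d ∈ L^∞_loc(ℝ≥0;ℝᵐ)`) admits an FTISS Lyapunov function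
`V`, i.e. `μ₁(|x|) ≤ V(x) ≤ μ₂(|x|)` with `μ₁, μ₂ ∈ K∞` and
`DV(z)·f(z,d) ≤ −c V(z)^θ` whenever `|z| ≥ χ(|d|)` (`χ ∈ K`, `c > 0`,
`θ ∈ (0,1)`), then the system is FTISS: there are `ϑ ∈ K` and `β ∈ GKL` such
that every solution satisfies
`|z(t)| ≤ β(|z₀|,t) + ϑ(ess sup_{s∈(0,t)} |d(s)|)` for all `t ≥ 0`. -/
theorem ftiss_of_ftiss_lyapunov_function
    (n m : ℕ)
    (f : EuclideanSpace ℝ (Fin n) → EuclideanSpace ℝ (Fin m) → EuclideanSpace ℝ (Fin n))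
    (hf_cont : Continuous fun p : EuclideanSpace ℝ (Fin n) × EuclideanSpace ℝ (Fin m) =>
      f p.1 p.2)
    (hf0 : f 0 0 = 0)
    (d : ℝ → EuclideanSpace ℝ (Fin m))
    (hd_meas : AEStronglyMeasurable d volume)
    (hd_loc : ∀ T > (0:ℝ), ∃ M : ℝ, ∀ᵐ s ∂(volume.restrict (Ioo 0 T)), ‖d s‖ ≤ M)
    (V : EuclideanSpace ℝ (Fin n) → ℝ)
    (hV_smooth : ContDiff ℝ 1 V) (hV_nonneg : ∀ x, 0 ≤ V x)
    (μ₁ μ₂ χ : ℝ → ℝ) (hμ₁ : ClassKInf μ₁) (hμ₂ : ClassKInf μ₂) (hχ : ClassK χ)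
    (c θ : ℝ) (hc : 0 < c) (hθ : θ ∈ Ioo (0:ℝ) 1)
    (hsandwich : ∀ x, μ₁ ‖x‖ ≤ V x ∧ V x ≤ μ₂ ‖x‖)
    (hdecay : ∀ (z : EuclideanSpace ℝ (Fin n)) (w : EuclideanSpace ℝ (Fin m)),
      χ ‖w‖ ≤ ‖z‖ → fderiv ℝ V z (f z w) ≤ -c * V z ^ θ) :
    ∃ ϑ β : _, ClassK ϑ ∧ ClassGKL β ∧
      ∀ z : ℝ → EuclideanSpace ℝ (Fin n),
        (∀ t ≥ (0:ℝ), HasDerivAt z (f (z t) (d t)) t) →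
        ∀ t ≥ (0:ℝ),
          ‖z t‖ ≤ β ‖z 0‖ t + ϑ (essSup (fun s => ‖d s‖) (volume.restrict (Ioo 0 t))) := by
  have hμ₂c := hμ₂.1.1
  have hμ₂m := hμ₂.1.2.1
  have hμ₂0 := hμ₂.1.2.2.1
  have hμ₂nn := hμ₂.1.2.2.2
  have hχc := hχ.1
  have hχm := hχ.2.1
  have hχ0 := hχ.2.2.1
  have hχnn := hχ.2.2.2
  obtain ⟨hθ0, hθ1⟩ := hθ
  set P := 1 - θ with hPdef
  have hP : 0 < P := by rw [hPdef]; linarith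
  have hP1 : P ≠ 0 := hP.ne'
  -- simplification of the β-argument at t = 0
  have hEq : ∀ s : ℝ, 0 ≤ s → (max (s ^ P - c * P * 0) 0) ^ (1/P) = s := by
    intro s hs
    rw [mul_zero, sub_zero, max_eq_left (Real.rpow_nonneg hs _), ← Real.rpow_mul hs,
      mul_one_div, div_self hP1, Real.rpow_one]
  refine ⟨fun r => KInv μ₁ (μ₂ (χ r)),
    fun s t => KInv μ₁ ((max ((μ₂ s) ^ P - c * P * t) 0) ^ (1/P)), ?_, ?_, ?_⟩
  · -- ClassK ϑ
    refine ⟨?_, ?_, ?_, ?_⟩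
    · exact (KInvAux.continuousOn hμ₁).comp (hμ₂c.comp hχc (fun r hr => hχnn r hr))
        (fun r hr => hμ₂nn _ (hχnn r hr))
    · intro r hr r' hr' hlt
      exact KInvAux.strictMonoOn hμ₁ (hμ₂nn _ (hχnn r hr)) (hμ₂nn _ (hχnn r' hr'))
        (hμ₂m (hχnn r hr) (hχnn r' hr') (hχm hr hr' hlt))
    · show KInv μ₁ (μ₂ (χ 0)) = 0
      rw [hχ0, hμ₂0, KInvAux.zero hμ₁]
    · exact fun r hr => KInvAux.nonneg hμ₁ (hμ₂nn _ (hχnn r hr))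
  · -- ClassGKL β
    refine ⟨?_, ⟨?_, ?_, ?_, ?_⟩, ?_⟩
    · exact fun s hs t ht => KInvAux.nonneg hμ₁ (Real.rpow_nonneg (le_max_right _ _) _)
    · refine (((KInvAux.continuousOn hμ₁).comp hμ₂c (fun s hs => hμ₂nn s hs)).congr ?_)
      intro s hs
      simp only [Function.comp]
      rw [hEq (μ₂ s) (hμ₂nn s hs)]
    · intro s hs s' hs' hlt
      have h := KInvAux.strictMonoOn hμ₁ (hμ₂nn s hs) (hμ₂nn s' hs') (hμ₂m hs hs' hlt)
      simp only []
      rw [hEq (μ₂ s) (hμ₂nn s hs), hEq (μ₂ s') (hμ₂nn s' hs')]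
      exact h
    · simp only []
      rw [hEq (μ₂ 0) (le_of_eq hμ₂0.symm), hμ₂0, KInvAux.zero hμ₁]
    · exact fun s hs => KInvAux.nonneg hμ₁ (Real.rpow_nonneg (le_max_right _ _) _)
    · intro s hs
      refine ⟨(μ₂ s) ^ P / (c * P), div_nonneg (Real.rpow_nonneg (hμ₂nn s hs.le) _)
        (by positivity), fun t ht => ?_⟩
      have hcp : 0 < c * P := by positivity
      have h1 : (μ₂ s) ^ P - c * P * t ≤ 0 := by
        have h2 : c * P * ((μ₂ s) ^ P / (c * P)) = (μ₂ s) ^ P := by field_simp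
        have h3 : (μ₂ s) ^ P ≤ t * (c * P) := (div_le_iff₀ hcp).1 ht
        linarith
      show KInv μ₁ ((max ((μ₂ s) ^ P - c * P * t) 0) ^ (1/P)) = 0
      rw [max_eq_right h1, Real.zero_rpow (one_div_ne_zero hP1), KInvAux.zero hμ₁]
  · -- main estimate
    intro z hz T hT
    beta_reduce
    set D := essSup (fun s => ‖d s‖) (volume.restrict (Ioo 0 T)) with hD
    set g : ℝ → ℝ := fun t => V (z t) with hgdef
    set g' : ℝ → ℝ := fun t => (fderiv ℝ V (z t)) (f (z t) (d t)) with hg'def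
    have hgder : ∀ t, 0 ≤ t → HasDerivAt g (g' t) t := fun t ht =>
      ((hV_smooth.differentiable one_ne_zero (z t)).hasFDerivAt).comp_hasDerivAt t (hz t ht)
    rcases eq_or_lt_of_le hT with hT0 | hTpos
    · -- T = 0
      have hD0 : D = 0 := by
        rw [hD, ← hT0, Ioo_self, Measure.restrict_empty]
        rw [essSup, ae_zero, Filter.limsup_eq]
        have h : {a : ℝ | ∀ᶠ x in ⊥, ‖d x‖ ≤ a} = univ := by ext a; simp
        rw [h]
        exact Real.sInf_of_not_bddBelow (by simpa using not_bddBelow_univ (α := ℝ))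
      rw [← hT0]
      show ‖z 0‖ ≤ KInv μ₁ ((max ((μ₂ ‖z 0‖) ^ P - c * P * 0) 0) ^ (1/P)) + KInv μ₁ (μ₂ (χ D))
      rw [hD0, hχ0, hμ₂0, KInvAux.zero hμ₁, add_zero,
        hEq (μ₂ ‖z 0‖) (hμ₂nn _ (norm_nonneg _))]
      exact KInvAux.key hμ₁ (norm_nonneg _) (hμ₂nn _ (norm_nonneg _))
        (le_trans (hsandwich (z 0)).1 (hsandwich (z 0)).2)
    · -- T > 0
      have hμres : volume.restrict (Ioo 0 T) ≠ 0 := by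
        intro h
        rw [Measure.restrict_eq_zero, Real.volume_Ioo] at h
        exact absurd h (ENNReal.ofReal_pos.2 (by linarith)).ne'
      haveI : (ae (volume.restrict (Ioo 0 T))).NeBot := ae_neBot.2 hμres
      obtain ⟨M, hM⟩ := hd_loc T hTpos
      have hbdd : IsBoundedUnder (· ≤ ·) (ae (volume.restrict (Ioo 0 T))) fun s => ‖d s‖ :=
        ⟨M, by simpa [eventually_map] using hM⟩
      have hDae : ∀ᵐ s ∂(volume.restrict (Ioo 0 T)), ‖d s‖ ≤ D := ae_le_essSup hbdd
      have hD0 : 0 ≤ D := by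
        by_contra hneg
        push_neg at hneg
        obtain ⟨s, hs⟩ := hDae.exists
        exact absurd (lt_of_le_of_lt hs hneg) (not_lt.2 (norm_nonneg _))
      set L := μ₂ (χ D) with hLdef
      have hχD : 0 ≤ χ D := hχnn D hD0
      have hL0 : 0 ≤ L := hμ₂nn _ hχD
      have hzc : ContinuousOn z (Ici 0) := fun t ht =>
        (hz t ht).continuousAt.continuousWithinAt
      -- pointwise decay
      have hdecpt : ∀ s, ‖d s‖ ≤ D → L < g s → g' s ≤ -c * g s ^ θ := by
        intro s hds hLs
        have h1 : χ ‖d s‖ ≤ χ D := hχm.monotoneOn (norm_nonneg (d s)) hD0 hds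
        have hzs : χ ‖d s‖ ≤ ‖z s‖ := by
          by_contra hlt
          push_neg at hlt
          have h2 : g s ≤ μ₂ (χ D) :=
            le_trans (hsandwich (z s)).2
              (hμ₂m.monotoneOn (norm_nonneg _) hχD (le_trans hlt.le h1))
          exact absurd h2 (not_le.2 hLs)
        exact hdecay (z s) (d s) hzs
      have hae1 : ∀ᵐ s ∂volume, s ∈ Ioo 0 T → ‖d s‖ ≤ D :=
        (ae_restrict_iff' measurableSet_Ioo).1 hDae
      have hae2 : ∀ᵐ s : ℝ ∂volume, s ≠ 0 := by
        rw [ae_iff]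
        have : {s : ℝ | ¬ s ≠ 0} = {0} := by ext x; simp
        rw [this]
        exact measure_singleton 0
      have hae3 : ∀ᵐ s : ℝ ∂volume, s ≠ T := by
        rw [ae_iff]
        have : {s : ℝ | ¬ s ≠ T} = {T} := by ext x; simp
        rw [this]
        exact measure_singleton T
      have hdec_vol : ∀ᵐ s ∂volume, s ∈ Icc 0 T → (L < g s → g' s ≤ -c * g s ^ θ) := by
        filter_upwards [hae1, hae2, hae3] with s h1 h2 h3 hmem
        exact hdecpt s (h1 ⟨lt_of_le_of_ne hmem.1 (Ne.symm h2), lt_of_le_of_ne hmem.2 h3⟩)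
      -- measurability of g'
      have hzm : AEStronglyMeasurable z (volume.restrict (Icc 0 T)) :=
        ((hzc.mono (Icc_subset_Ici_self)).aestronglyMeasurable measurableSet_Icc)
      have hFc : Continuous (fun p : EuclideanSpace ℝ (Fin n) × EuclideanSpace ℝ (Fin m) =>
          (fderiv ℝ V p.1) (f p.1 p.2)) :=
        ((hV_smooth.continuous_fderiv one_ne_zero).comp continuous_fst).clm_apply hf_cont
      have hg'm : AEStronglyMeasurable g' (volume.restrict (Icc 0 T)) :=
        hFc.comp_aestronglyMeasurable (hzm.prodMk hd_meas.restrict)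
      -- uniform bound of g'
      obtain ⟨C, hCbd⟩ : ∃ C, ∀ᵐ s ∂(volume.restrict (Icc 0 T)), |g' s| ≤ C := by
        have hK : IsCompact ((z '' Icc 0 T) ×ˢ
            Metric.closedBall (0 : EuclideanSpace ℝ (Fin m)) D) :=
          (isCompact_Icc.image_of_continuousOn (hzc.mono Icc_subset_Ici_self)).prod
            (isCompact_closedBall _ _)
        obtain ⟨C, hC⟩ := hK.exists_bound_of_continuousOn hFc.continuousOn
        refine ⟨C, ?_⟩
        rw [ae_restrict_iff' measurableSet_Icc]
        filter_upwards [hae1, hae2, hae3] with s h1 h2 h3 hmem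
        have hds := h1 ⟨lt_of_le_of_ne hmem.1 (Ne.symm h2), lt_of_le_of_ne hmem.2 h3⟩
        have := hC (z s, d s) ⟨⟨s, hmem, rfl⟩, by
          simpa [Metric.mem_closedBall, dist_zero_right] using hds⟩
        simpa [Real.norm_eq_abs] using this
      -- the claim
      have claim : g T ≤ max ((max ((g 0) ^ P - c * P * T) 0) ^ (1/P)) L := by
        by_cases hall : ∀ t ∈ Icc 0 T, L < g t
        · have hcore := core_decay hc ⟨hθ0, hθ1⟩ hT hL0
            (fun t ht => hgder t ht.1) hall hg'm ⟨C, hCbd⟩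
            (by
              rw [ae_restrict_iff' measurableSet_Icc]
              filter_upwards [hdec_vol] with s h hmem
              exact h hmem (hall s hmem))
          have hcore' : g T ^ P ≤ g 0 ^ P - c * P * T := by
            rw [hPdef]
            calc g T ^ (1 - θ) ≤ g 0 ^ (1 - θ) - c * (1 - θ) * (T - 0) := hcore
              _ = g 0 ^ (1 - θ) - c * (1 - θ) * T := by ring
          refine le_max_of_le_left ?_
          calc g T = (g T ^ P) ^ (1/P) := by
                rw [← Real.rpow_mul (hV_nonneg _), mul_one_div, div_self hP1, Real.rpow_one]
            _ ≤ (max ((g 0) ^ P - c * P * T) 0) ^ (1/P) :=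
                Real.rpow_le_rpow (Real.rpow_nonneg (hV_nonneg _) _)
                  (le_trans hcore' (le_max_left _ _)) (by positivity)
        · push_neg at hall
          obtain ⟨t₀, ht₀, hgt₀⟩ := hall
          refine le_max_of_le_right ?_
          by_contra hgT
          push_neg at hgT
          set S := {t | t ∈ Icc 0 T ∧ g t ≤ L} with hSdef
          have hSne : S.Nonempty := ⟨t₀, ht₀, hgt₀⟩
          have hSbdd : BddAbove S := ⟨T, fun x hx => hx.1.2⟩
          have hgcIcc : ContinuousOn g (Icc 0 T) := fun t ht =>
            (hgder t ht.1).continuousAt.continuousWithinAt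
          have hSclosed : IsClosed S := by
            have h := hgcIcc.preimage_isClosed_of_isClosed isClosed_Icc (isClosed_Iic (a := L))
            have : S = Icc 0 T ∩ g ⁻¹' Iic L := by
              ext x
              simp [hSdef, mem_Icc, and_assoc]
            rw [this]
            exact h
          set t₁ := sSup S with ht₁def
          have ht₁S : t₁ ∈ S := hSclosed.csSup_mem hSne hSbdd
          have ht₁T : t₁ < T :=
            lt_of_le_of_ne ht₁S.1.2 (fun h => absurd (h ▸ ht₁S.2) (not_le.2 hgT))
          have hup : ∀ t ∈ Ioc t₁ T, L < g t := by
            intro t ht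
            by_contra hle
            push_neg at hle
            exact absurd (le_csSup hSbdd ⟨⟨le_trans ht₁S.1.1 ht.1.le, ht.2⟩, hle⟩)
              (not_le.2 ht.1)
          have hstep : ∀ t' ∈ Ioo t₁ T, g T ≤ g t' := by
            intro t' ht'
            have ht'0 : 0 ≤ t' := le_trans ht₁S.1.1 ht'.1.le
            have hsub : Icc t' T ⊆ Icc 0 T := Icc_subset_Icc ht'0 le_rfl
            have hcore := core_decay hc ⟨hθ0, hθ1⟩ ht'.2.le hL0
              (fun t ht => hgder t (le_trans ht'0 ht.1))
              (fun t ht => hup t ⟨lt_of_lt_of_le ht'.1 ht.1, ht.2⟩)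
              (hg'm.mono_measure (Measure.restrict_mono hsub le_rfl))
              ⟨C, hCbd.filter_mono (ae_mono (Measure.restrict_mono hsub le_rfl))⟩
              (by
                rw [ae_restrict_iff' measurableSet_Icc]
                filter_upwards [hdec_vol] with s h hmem
                exact h ⟨le_trans ht'0 hmem.1, hmem.2⟩
                  (hup s ⟨lt_of_lt_of_le ht'.1 hmem.1, hmem.2⟩))
            have h2 : g T ^ P ≤ g t' ^ P := by
              have hpos : 0 < c * (1 - θ) * (T - t') := by
                have := sub_pos.2 ht'.2
                positivity
              calc g T ^ P = g T ^ (1 - θ) := by rw [hPdef]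
                _ ≤ g t' ^ (1 - θ) - c * (1 - θ) * (T - t') := hcore
                _ ≤ g t' ^ (1 - θ) := by linarith
                _ = g t' ^ P := by rw [hPdef]
            exact (Real.rpow_le_rpow_iff (hV_nonneg _) (hV_nonneg _) hP).1 h2
          have hcont : Tendsto g (𝓝[>] t₁) (𝓝 (g t₁)) :=
            ((hgder t₁ ht₁S.1.1).continuousAt.tendsto).mono_left nhdsWithin_le_nhds
          have hev : ∀ᶠ t' in 𝓝[>] t₁, g T ≤ g t' := by
            filter_upwards [Ioo_mem_nhdsGT_of_mem ⟨le_rfl, ht₁T⟩] with t' ht'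
            exact hstep t' ht'
          exact absurd (le_trans (ge_of_tendsto hcont hev) ht₁S.2) (not_le.2 hgT)
      -- assemble
      have hR'0 : (0:ℝ) ≤ (max ((μ₂ ‖z 0‖) ^ P - c * P * T) 0) ^ (1/P) :=
        Real.rpow_nonneg (le_max_right _ _) _
      have hR0 : (0:ℝ) ≤ (max ((g 0) ^ P - c * P * T) 0) ^ (1/P) :=
        Real.rpow_nonneg (le_max_right _ _) _
      have hmax0 : (0:ℝ) ≤ max ((max ((g 0) ^ P - c * P * T) 0) ^ (1/P)) L :=
        le_trans hR0 (le_max_left _ _)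
      have h1 : ‖z T‖ ≤ KInv μ₁ (max ((max ((g 0) ^ P - c * P * T) 0) ^ (1/P)) L) :=
        KInvAux.key hμ₁ (norm_nonneg _) hmax0 (le_trans (hsandwich (z T)).1 claim)
      have hRR' : (max ((g 0) ^ P - c * P * T) 0) ^ (1/P) ≤
          (max ((μ₂ ‖z 0‖) ^ P - c * P * T) 0) ^ (1/P) := by
        apply Real.rpow_le_rpow (le_max_right _ _) _ (by positivity)
        exact max_le_max (sub_le_sub_right
          (Real.rpow_le_rpow (hV_nonneg _) (hsandwich (z 0)).2 hP.le) _) le_rfl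
      have h2 : KInv μ₁ (max ((max ((g 0) ^ P - c * P * T) 0) ^ (1/P)) L) ≤
          KInv μ₁ ((max ((μ₂ ‖z 0‖) ^ P - c * P * T) 0) ^ (1/P)) + KInv μ₁ L := by
        rcases max_cases ((max ((g 0) ^ P - c * P * T) 0) ^ (1/P)) L with ⟨heq, _⟩ | ⟨heq, _⟩
        · rw [heq]
          exact le_add_of_le_of_nonneg
            (KInvAux.monotoneOn hμ₁ hR0 hR'0 hRR') (KInvAux.nonneg hμ₁ hL0)
        · rw [heq]
          exact le_add_of_nonneg_left (KInvAux.nonneg hμ₁ hR'0)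
      exact le_trans h1 h2
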